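/- For every π ∈ R_{≥0}, the optimal value of the linear program (*): minimize Σ_{i∈T} c̲_i y_i + Σ_{i∈T} ρ_i subject to Σ_{i∈T} y_i = 1, π + ρ_i ≥ d_i y_i for all i ∈ T, y ∈ [0,1]^T, ρ ∈ R_{≥0}^T, equals the optimal value of the linear program (*'): minimize Σ_{i∈T} c̲_i y̲_i + Σ_{i∈T} c̄_i ȳ_i subject to Σ_{i∈T}(y̲_i + ȳ_i) = 1, y̲_i ∈ [0, π_i] and ȳ_i ∈ [0, 1 − π_i] for all i ∈ T. -/
import Mathlib


open Classical
noncomputable section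

/-- For every `π ≥ 0`, the optimal value of the LP (*) equals the optimal value of the
LP (*'), where `π_i = min {1, π / d_i}` and `c̄_i = c̲_i + d_i`. -/
theorem stmt3 (q : ℕ) (hq : 1 ≤ q) (cl d : Fin q → ℝ)
    (hcl : ∀ i, 0 ≤ cl i) (hd : ∀ i, 0 < d i) (π : ℝ) (hπ : 0 ≤ π) :
    sInf {v | ∃ y ρ : Fin q → ℝ,
        (∀ i, 0 ≤ y i ∧ y i ≤ 1) ∧ (∀ i, 0 ≤ ρ i) ∧
        (∀ i, d i * y i ≤ π + ρ i) ∧ (∑ i, y i = 1) ∧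
        v = (∑ i, cl i * y i) + ∑ i, ρ i}
    = sInf {v | ∃ yl yu : Fin q → ℝ,
        (∀ i, 0 ≤ yl i ∧ yl i ≤ min 1 (π / d i)) ∧
        (∀ i, 0 ≤ yu i ∧ yu i ≤ 1 - min 1 (π / d i)) ∧
        (∑ i, (yl i + yu i) = 1) ∧
        v = (∑ i, cl i * yl i) + ∑ i, (cl i + d i) * yu i} := by
  set A : Set ℝ := {v | ∃ y ρ : Fin q → ℝ,
        (∀ i, 0 ≤ y i ∧ y i ≤ 1) ∧ (∀ i, 0 ≤ ρ i) ∧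
        (∀ i, d i * y i ≤ π + ρ i) ∧ (∑ i, y i = 1) ∧
        v = (∑ i, cl i * y i) + ∑ i, ρ i} with hA
  set B : Set ℝ := {v | ∃ yl yu : Fin q → ℝ,
        (∀ i, 0 ≤ yl i ∧ yl i ≤ min 1 (π / d i)) ∧
        (∀ i, 0 ≤ yu i ∧ yu i ≤ 1 - min 1 (π / d i)) ∧
        (∑ i, (yl i + yu i) = 1) ∧
        v = (∑ i, cl i * yl i) + ∑ i, (cl i + d i) * yu i} with hB
  have hmnn : ∀ i, 0 ≤ min 1 (π / d i) := fun i =>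
    le_min zero_le_one (div_nonneg hπ (hd i).le)
  have hm1 : ∀ i, min 1 (π / d i) ≤ 1 := fun i => min_le_left _ _
  -- B → A with equal value
  have hBA : ∀ v ∈ B, v ∈ A := by
    rintro v ⟨yl, yu, hyl, hyu, hsum, hv⟩
    refine ⟨fun i => yl i + yu i, fun i => d i * yu i, ?_, ?_, ?_, hsum, ?_⟩
    · intro i
      dsimp only
      constructor
      · exact add_nonneg (hyl i).1 (hyu i).1
      · have := (hyl i).2; have := (hyu i).2; linarith
    · intro i; exact mul_nonneg (hd i).le (hyu i).1
    · intro i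
      dsimp only
      have h1 : yl i ≤ π / d i := (hyl i).2.trans (min_le_right _ _)
      have h2 : d i * yl i ≤ π := by
        rw [mul_comm]
        exact (le_div_iff₀ (hd i)).mp h1
      nlinarith [hd i]
    · rw [hv]
      rw [← Finset.sum_add_distrib, ← Finset.sum_add_distrib]
      congr 1; funext i; ring
  -- A → B with value ≤
  have hAB : ∀ v ∈ A, ∃ w ∈ B, w ≤ v := by
    rintro v ⟨y, ρ, hy, hρ, hcon, hsum, hv⟩
    set yl : Fin q → ℝ := fun i => min (y i) (min 1 (π / d i)) with hyl
    set yu : Fin q → ℝ := fun i => y i - yl i with hyu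
    have hyl0 : ∀ i, 0 ≤ yl i := fun i => le_min (hy i).1 (hmnn i)
    have hylm : ∀ i, yl i ≤ min 1 (π / d i) := fun i => min_le_right _ _
    have hyly : ∀ i, yl i ≤ y i := fun i => min_le_left _ _
    refine ⟨(∑ i, cl i * yl i) + ∑ i, (cl i + d i) * yu i, ⟨yl, yu, ?_, ?_, ?_, rfl⟩, ?_⟩
    · exact fun i => ⟨hyl0 i, hylm i⟩
    · intro i
      constructor
      · simp only [hyu]; linarith [hyly i]
      · simp only [hyu]
        have h1 : y i + min 1 (π / d i) - 1 ≤ yl i := by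
          apply le_min
          · linarith [hm1 i]
          · linarith [(hy i).2]
        linarith
    · simp only [hyu]
      have : ∀ i, yl i + (y i - yl i) = y i := fun i => by ring
      simp_rw [this]; exact hsum
    · rw [hv]
      have key : ∀ i, d i * yu i ≤ ρ i := by
        intro i
        rcases le_total (y i) (min 1 (π / d i)) with h | h
        · have : yl i = y i := min_eq_left h
          simp only [hyu, this, sub_self, mul_zero]
          exact hρ i
        · have hyl_eq : yl i = min 1 (π / d i) := min_eq_right h
          rcases le_total (π / d i) 1 with h2 | h2
          · have hm : min 1 (π / d i) = π / d i := min_eq_right h2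
            have : d i * (π / d i) = π := by
              rw [mul_comm, div_mul_cancel₀ _ (hd i).ne']
            simp only [hyu, hyl_eq, hm]
            have := hcon i
            nlinarith [hd i]
          · have hm : min 1 (π / d i) = 1 := min_eq_left h2
            have hy1 : y i ≤ 1 := (hy i).2
            simp only [hyu, hyl_eq, hm]
            have h3 : y i - 1 ≤ 0 := by linarith
            have : d i * (y i - 1) ≤ 0 := mul_nonpos_of_nonneg_of_nonpos (hd i).le h3
            linarith [hρ i]
      have hsum2 : ∑ i, d i * yu i ≤ ∑ i, ρ i := Finset.sum_le_sum fun i _ => key i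
      have heq : ∑ i, (cl i + d i) * yu i = ∑ i, cl i * yu i + ∑ i, d i * yu i := by
        rw [← Finset.sum_add_distrib]; congr 1; funext i; ring
      have heq2 : ∑ i, cl i * yl i + ∑ i, cl i * yu i = ∑ i, cl i * y i := by
        rw [← Finset.sum_add_distrib]; congr 1; funext i; simp only [hyu]; ring
      linarith
  -- nonemptiness of A
  have hAne : A.Nonempty := by
    refine ⟨(∑ i, cl i * (if i = ⟨0, hq⟩ then (1:ℝ) else 0)) + ∑ i, d i,
      fun i => if i = ⟨0, hq⟩ then 1 else 0, d, ?_, fun i => (hd i).le, ?_, ?_, rfl⟩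
    · intro i; by_cases h : i = ⟨0, hq⟩ <;> simp [h]
    · intro i; by_cases h : i = ⟨0, hq⟩ <;> simp [h] <;> linarith [hd i, hπ]
    · simp
  have hBne : B.Nonempty := by
    obtain ⟨v, hv⟩ := hAne
    obtain ⟨w, hw, _⟩ := hAB v hv
    exact ⟨w, hw⟩
  -- bounded below by 0
  have hAbdd : BddBelow A := by
    refine ⟨0, ?_⟩
    rintro v ⟨y, ρ, hy, hρ, _, _, hv⟩
    rw [hv]
    apply add_nonneg
    · exact Finset.sum_nonneg fun i _ => mul_nonneg (hcl i) (hy i).1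
    · exact Finset.sum_nonneg fun i _ => hρ i
  have hBbdd : BddBelow B := by
    refine ⟨0, ?_⟩
    rintro v ⟨yl, yu, hyl, hyu, _, hv⟩
    rw [hv]
    apply add_nonneg
    · exact Finset.sum_nonneg fun i _ => mul_nonneg (hcl i) (hyl i).1
    · exact Finset.sum_nonneg fun i _ =>
        mul_nonneg (add_nonneg (hcl i) (hd i).le) (hyu i).1
  apply le_antisymm
  · exact le_csInf hBne fun b hb => csInf_le hAbdd (hBA b hb)
  · refine le_csInf hAne fun a ha => ?_
    obtain ⟨w, hw, hwa⟩ := hAB a ha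
    exact (csInf_le hBbdd hw).trans hwa
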